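/- For every ordinal β < α and every y ∈ X^{β+1}, the support of y (with respect to the biorthogonal system {z_i*}) does not properly contain the support of any vector z ∈ ⋃_{0≤γ≤β} X^γ. -/

import Mathlib

open Set Filter Topology

noncomputable section

namespace Paper

/-- `y` is an up-neighbor of `x` within the subforest `S`: both belong to `S`, `x < y`,
and no vertex of `S` lies strictly between them. -/
def UpNbrIn {P : Type*} [PartialOrder P] (S : Set P) (x y : P) : Prop :=
  x ∈ S ∧ y ∈ S ∧ x < y ∧ ∀ z ∈ S, ¬(x < z ∧ z < y)

/-- `x` is a terminal vertex of the subforest `S`: it has no up-neighbors within `S`. -/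
def TerminalIn {P : Type*} [PartialOrder P] (S : Set P) (x : P) : Prop :=
  x ∈ S ∧ ∀ y, ¬UpNbrIn S x y

/-- One step of the derived forest operation: delete every terminal vertex whose
down-neighbor has infinitely many terminal up-neighbors. -/
def derStep {P : Type*} [PartialOrder P] (S : Set P) : Set P :=
  S \ {x | TerminalIn S x ∧ ∃ u, UpNbrIn S u x ∧ {y | UpNbrIn S u y ∧ TerminalIn S y}.Infinite}

/-- Transfinite iteration of the derived forest operation: `derIter S β = S^{(β)}`,
with intersections at limit stages. -/
def derIter {P : Type*} [PartialOrder P] (S : Set P) (β : Ordinal) : Set P :=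
  Ordinal.limitRecOn β S (fun _ T => derStep T)
    (fun β _ ih => ⋂ (γ : Ordinal), ⋂ (h : γ < β), ih γ h)

/-- Weak* closure of a set in the dual of a real normed space. -/
def wcl {Z : Type*} [NormedAddCommGroup Z] [NormedSpace ℝ Z]
    (A : Set (StrongDual ℝ Z)) : Set (StrongDual ℝ Z) :=
  StrongDual.toWeakDual ⁻¹' closure (StrongDual.toWeakDual '' A)

/-- The weak* derived set `A^{(1)} = ⋃ₙ weak*-closure (A ∩ n B_{Z*})`. -/
def derSet {Z : Type*} [NormedAddCommGroup Z] [NormedSpace ℝ Z]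
    (A : Set (StrongDual ℝ Z)) : Set (StrongDual ℝ Z) :=
  ⋃ n : ℕ, wcl (A ∩ {f | ‖f‖ ≤ (n : ℝ)})

/-- Transfinite weak* derived sets: `A^{(0)} = A`, `A^{(β+1)} = (A^{(β)})^{(1)}`, and
`A^{(β)} = ⋃_{γ<β} A^{(γ)}` at limit stages. -/
def derSetIter {Z : Type*} [NormedAddCommGroup Z] [NormedSpace ℝ Z]
    (A : Set (StrongDual ℝ Z)) (α : Ordinal) : Set (StrongDual ℝ Z) :=
  Ordinal.limitRecOn α A (fun _ T => derSet T)
    (fun α _ ih => ⋃ (β : Ordinal), ⋃ (h : β < α), ih β h)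

/-- The coefficient attached to a vertex `u` of the forest: the label of its down-neighbor,
or the label of `u` itself when `u` is an initial vertex (`n₀ = n₁`). -/
def coefN {P : Type*} [PartialOrder P] (e : P → ℕ) (u : P) : ℕ :=
  letI := Classical.dec (∃ w, w ⋖ u)
  if h : ∃ w, w ⋖ u then e h.choose else e u

/-- The vector `z*(v)` shortened to the subforest `S`:
`∑_{u ≤ v, u ∈ S} n_{i-1} z*_{n_i}`. -/
def shortVec {P : Type*} [PartialOrder P] {Z : Type*} [NormedAddCommGroup Z] [NormedSpace ℝ Z]
    (e : P → ℕ) (zs : ℕ → StrongDual ℝ Z) (S : Set P) (v : P) : StrongDual ℝ Z :=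
  ∑ᶠ u ∈ ({w | w ≤ v} ∩ S), (coefN e u : ℝ) • zs (e u)

/-- The shortening `X^β` of the set `X_α` to the subforest `S` (for `S = (F_α)^β`);
for `S = univ` this is `X_α` itself. -/
def XsetOf {P : Type*} [PartialOrder P] {Z : Type*} [NormedAddCommGroup Z] [NormedSpace ℝ Z]
    (e : P → ℕ) (zs : ℕ → StrongDual ℝ Z) (S : Set P) : Set (StrongDual ℝ Z) :=
  {x | ∃ v : P, (¬∃ y, v ⋖ y) ∧ x = shortVec e zs S v}

/-- The largest index in the support of a vector of `X^β` (read off by evaluating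
against the basic sequence); it is the label of the vertex `v(x)`. -/
def topIdx {Z : Type*} [NormedAddCommGroup Z] [NormedSpace ℝ Z]
    (z : ℕ → Z) (x : StrongDual ℝ Z) : ℕ :=
  sSup {n | x (z n) ≠ 0}

/-- The vector `y(x)`: `x` with the coordinate at its top vertex `v(x)` replaced by `0`. -/
def truncTop {Z : Type*} [NormedAddCommGroup Z] [NormedSpace ℝ Z]
    (z : ℕ → Z) (zs : ℕ → StrongDual ℝ Z) (x : StrongDual ℝ Z) :
    StrongDual ℝ Z :=
  x - x (z (topIdx z x)) • zs (topIdx z x)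

section Helpers

theorem fin_exists_minimal_wrt {W : Type*} [PartialOrder W] {s : Set W} (h : s.Finite)
    (hs : s.Nonempty) : ∃ a ∈ s, ∀ a' ∈ s, a' ≤ a → a = a' := by
  obtain ⟨i, hi⟩ := h.exists_minimal hs
  exact ⟨i, hi.1, fun a' ha' hle => le_antisymm (hi.2 ha' hle) hle⟩

theorem fin_exists_maximal_wrt {W : Type*} [PartialOrder W] {s : Set W} (h : s.Finite)
    (hs : s.Nonempty) : ∃ a ∈ s, ∀ a' ∈ s, a ≤ a' → a = a' := by
  obtain ⟨i, hi⟩ := h.exists_maximal hs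
  exact ⟨i, hi.1, fun a' ha' hle => le_antisymm hle (hi.2 ha' hle)⟩

end Helpers

section PartA
variable {P : Type*} [PartialOrder P]

theorem derIter_zero (S : Set P) : derIter S 0 = S := Ordinal.limitRecOn_zero _ _ _

theorem derIter_succ (S : Set P) (δ : Ordinal) :
    derIter S (δ + 1) = derStep (derIter S δ) := by
  rw [derIter, Ordinal.add_one_eq_succ, Ordinal.limitRecOn_succ]
  rfl

theorem derIter_limit (S : Set P) {δ : Ordinal} (h : Order.IsSuccLimit δ) :
    derIter S δ = ⋂ (γ : Ordinal), ⋂ (_ : γ < δ), derIter S γ := by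
  rw [derIter, Ordinal.limitRecOn_limit _ _ _ _ h]
  rfl

theorem derStep_subset (S : Set P) : derStep S ⊆ S := diff_subset

theorem derIter_anti (S : Set P) : ∀ {δ σ : Ordinal}, σ ≤ δ → derIter S δ ⊆ derIter S σ := by
  intro δ
  induction δ using Ordinal.limitRecOn with
  | zero => intro σ h; rw [nonpos_iff_eq_zero.mp h]
  | add_one δ ih =>
      intro σ h
      rcases eq_or_lt_of_le h with rfl | hlt
      · exact le_refl _
      · have h2 : σ ≤ δ := by
          rw [Ordinal.add_one_eq_succ] at hlt
          exact Order.lt_succ_iff.mp hlt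
        rw [derIter_succ]
        exact (derStep_subset _).trans (ih h2)
  | limit δ hl ih =>
      intro σ h
      rcases eq_or_lt_of_le h with rfl | hlt
      · exact le_refl _
      · rw [derIter_limit S hl]
        exact fun x hx => by
          have := mem_iInter₂.mp hx σ hlt
          exact this

end PartA

section PartB
variable {W : Type*} [PartialOrder W]
  (hfin : ∀ x : W, {y : W | y ≤ x}.Finite)

include hfin
set_option linter.unusedSectionVars false

/-- a minimal element of `S` strictly between `a` and `b` (inclusive of `b`). -/
theorem exists_min_in (S : Set W) {a b : W} (hab : a < b) (hb : b ∈ S) :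
    ∃ c ∈ S, a < c ∧ c ≤ b ∧ ∀ z ∈ S, a < z → z < c → False := by
  have hTfin : {z : W | z ∈ S ∧ a < z ∧ z ≤ b}.Finite :=
    (hfin b).subset (fun z hz => hz.2.2)
  obtain ⟨c, hcT, hmin⟩ := fin_exists_minimal_wrt hTfin ⟨b, hb, hab, le_rfl⟩
  refine ⟨c, hcT.1, hcT.2.1, hcT.2.2, ?_⟩
  intro z hz haz hzc
  have hzT : z ∈ {z : W | z ∈ S ∧ a < z ∧ z ≤ b} :=
    ⟨hz, haz, le_of_lt (lt_of_lt_of_le hzc hcT.2.2)⟩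
  exact absurd (hmin z hzT (le_of_lt hzc)) (ne_of_gt hzc)

theorem exists_covby_le {a b : W} (hab : a < b) : ∃ c, a ⋖ c ∧ c ≤ b := by
  obtain ⟨c, -, h1, h2, h3⟩ := exists_min_in hfin Set.univ hab (mem_univ b)
  exact ⟨c, ⟨h1, fun z hz1 hz2 => h3 z (mem_univ z) hz1 hz2⟩, h2⟩

/-- derived forests are downward closed. -/
theorem derIter_dc : ∀ δ : Ordinal, ∀ x y : W, y ≤ x →
    x ∈ derIter Set.univ δ → y ∈ derIter Set.univ δ := by
  intro δ
  induction δ using Ordinal.limitRecOn with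
  | zero => intro x y _ _; rw [derIter_zero]; exact mem_univ y
  | add_one δ ih =>
      intro x y hyx hx
      rw [derIter_succ] at hx ⊢
      have hxS : x ∈ derIter Set.univ δ := derStep_subset _ hx
      have hyS : y ∈ derIter Set.univ δ := ih x y hyx hxS
      rcases eq_or_lt_of_le hyx with rfl | hlt
      · exact hx
      refine ⟨hyS, ?_⟩
      rintro ⟨hterm, -⟩
      obtain ⟨c, hcS, hyc, _, hmin⟩ := exists_min_in hfin (derIter Set.univ δ) hlt hxS
      exact hterm.2 c ⟨hyS, hcS, hyc, fun z hz hcon => hmin z hz hcon.1 hcon.2⟩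
  | limit δ hl ih =>
      intro x y hyx hx
      rw [derIter_limit _ hl] at hx ⊢
      exact mem_iInter₂.mpr fun γ hγ => ih γ hγ x y hyx (mem_iInter₂.mp hx γ hγ)

theorem upnbr_covby {δ : Ordinal} {u y : W} (h : UpNbrIn (derIter Set.univ δ) u y) : u ⋖ y :=
  ⟨h.2.2.1, fun z hz1 hz2 =>
    h.2.2.2 z (derIter_dc hfin δ y z (le_of_lt hz2) h.2.1) ⟨hz1, hz2⟩⟩

theorem terminal_iff {δ : Ordinal} {u : W} :
    TerminalIn (derIter Set.univ δ) u ↔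
      u ∈ derIter Set.univ δ ∧ ∀ y, u < y → y ∉ derIter Set.univ δ := by
  constructor
  · rintro ⟨huS, hterm⟩
    refine ⟨huS, fun y hy hyS => ?_⟩
    obtain ⟨c, hcS, h1, _, hmin⟩ := exists_min_in hfin (derIter Set.univ δ) hy hyS
    exact hterm c ⟨huS, hcS, h1, fun z hz hcon => hmin z hz hcon.1 hcon.2⟩
  · rintro ⟨huS, hdead⟩
    exact ⟨huS, fun y hy => hdead y hy.2.2.1 hy.2.1⟩

theorem minimal_mem_derIter {r : W} (hr : ∀ z, ¬ z < r) (δ : Ordinal) :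
    r ∈ derIter Set.univ δ := by
  induction δ using Ordinal.limitRecOn with
  | zero => rw [derIter_zero]; exact mem_univ r
  | add_one δ ih =>
      rw [derIter_succ]
      exact ⟨ih, by rintro ⟨-, u, hu, -⟩; exact hr u hu.2.2.1⟩
  | limit δ hl ih =>
      rw [derIter_limit _ hl]
      exact mem_iInter₂.mpr fun γ hγ => ih γ hγ

/-- every vertex not in a derived forest was deleted at a (unique first) successor stage. -/
theorem death_succ {x : W} {δ : Ordinal} (hx : x ∉ derIter Set.univ δ) :
    ∃ σ : Ordinal, σ + 1 ≤ δ ∧ x ∈ derIter Set.univ σ ∧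
      TerminalIn (derIter Set.univ σ) x ∧
      ∃ u, UpNbrIn (derIter Set.univ σ) u x ∧
        {y | UpNbrIn (derIter Set.univ σ) u y ∧ TerminalIn (derIter Set.univ σ) y}.Infinite := by
  classical
  have hmem0 := csInf_mem (s := {σ : Ordinal | x ∉ derIter Set.univ σ}) ⟨δ, hx⟩
  have hmem : x ∉ derIter Set.univ (sInf {σ : Ordinal | x ∉ derIter Set.univ σ}) := hmem0
  have hlt : ∀ γ, γ < sInf {σ : Ordinal | x ∉ derIter Set.univ σ} →
      x ∈ derIter Set.univ γ := by
    intro γ hγ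
    by_contra hγ'
    have h1 : γ ∈ {σ : Ordinal | x ∉ derIter Set.univ σ} := hγ'
    exact absurd (csInf_le' h1) (not_le_of_gt hγ)
  have hinfle : sInf {σ : Ordinal | x ∉ derIter Set.univ σ} ≤ δ := csInf_le' hx
  rcases Ordinal.zero_or_succ_or_isSuccLimit (sInf {σ : Ordinal | x ∉ derIter Set.univ σ})
    with h0 | ⟨σ, hσ⟩ | hl
  · rw [h0, derIter_zero] at hmem; exact absurd (mem_univ x) hmem
  · have hσ1 : sInf {σ : Ordinal | x ∉ derIter Set.univ σ} = σ + 1 := by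
      rw [← hσ, Ordinal.add_one_eq_succ]
    have hlt1 : σ < σ + 1 := by rw [Ordinal.add_one_eq_succ]; exact Order.lt_succ σ
    have hxσ : x ∈ derIter Set.univ σ := hlt σ (by rw [hσ1]; exact hlt1)
    have hxdel : x ∉ derIter Set.univ (σ + 1) := by rw [← hσ1]; exact hmem
    rw [derIter_succ] at hxdel
    have hxDel : TerminalIn (derIter Set.univ σ) x ∧
        ∃ u, UpNbrIn (derIter Set.univ σ) u x ∧
          {y | UpNbrIn (derIter Set.univ σ) u y ∧
            TerminalIn (derIter Set.univ σ) y}.Infinite := by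
      by_contra h
      exact hxdel ⟨hxσ, h⟩
    exact ⟨σ, hσ1 ▸ hinfle, hxσ, hxDel.1, hxDel.2⟩
  · exfalso
    rw [derIter_limit _ hl] at hmem
    simp only [mem_iInter] at hmem
    push_neg at hmem
    obtain ⟨γ, hγ, hγ'⟩ := hmem
    exact hγ' (hlt γ hγ)

end PartB

section Iso

/-- transfer a subtype order-iso along an order-iso. -/
def subIso {P Q : Type*} [PartialOrder P] [PartialOrder Q] (f : P ≃o Q)
    {p : P → Prop} {q : Q → Prop} (h : ∀ x, p x ↔ q (f x)) :
    {x // p x} ≃o {y // q y} where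
  toEquiv := f.toEquiv.subtypeEquiv h
  map_rel_iff' := by
    intro a b
    simp only [Equiv.subtypeEquiv_apply, Subtype.mk_le_mk]
    exact f.le_iff_le

/-- change the defining predicate of a subtype order. -/
def predIso {P : Type*} [PartialOrder P] {p q : P → Prop} (h : ∀ x, p x ↔ q x) :
    {x // p x} ≃o {y // q y} :=
  subIso (OrderIso.refl P) h

/-- a subtype with a trivially true predicate. -/
def univIso {P : Type*} [PartialOrder P] {p : P → Prop} (h : ∀ x, p x) :
    {x // p x} ≃o P where
  toEquiv := Equiv.subtypeUnivEquiv h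
  map_rel_iff' := by intro a b; rfl

/-- the upper set of a coercion in `WithBot`. -/
def coeUpIso {P : Type*} [PartialOrder P] (a : P) :
    {z : WithBot P // (a : WithBot P) ≤ z} ≃o {p : P // a ≤ p} where
  toFun z := ⟨z.val.unbot (fun h => WithBot.not_coe_le_bot a (h ▸ z.prop)),
    WithBot.coe_le_coe.mp (by rw [WithBot.coe_unbot]; exact z.prop)⟩
  invFun p := ⟨(p.val : WithBot P), WithBot.coe_le_coe.mpr p.prop⟩
  left_inv z := Subtype.ext (WithBot.coe_unbot _ _)
  right_inv p := Subtype.ext rfl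
  map_rel_iff' := by
    intro z z'
    simp only [Equiv.coe_fn_mk, Subtype.mk_le_mk]
    rw [← WithBot.coe_le_coe, WithBot.coe_unbot, WithBot.coe_unbot]
    rfl

/-- the upper set of `⟨n, a⟩` in a sigma order stays in the component. -/
def sigmaUpIso {A : ℕ → Type*} [∀ n, PartialOrder (A n)] (n : ℕ) (a : A n) :
    {q : A n // a ≤ q} ≃o {s : (Σ m, A m) // (⟨n, a⟩ : Σ m, A m) ≤ s} where
  toFun q := ⟨⟨n, q.val⟩, Sigma.le_def.mpr ⟨rfl, q.prop⟩⟩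
  invFun s := ⟨cast (congrArg A (Sigma.le_def.mp s.prop).1.symm) s.val.snd, by
    obtain ⟨⟨m, x⟩, hs⟩ := s
    obtain ⟨h, hx⟩ := Sigma.le_def.mp hs
    cases h
    simpa using hx⟩
  left_inv q := Subtype.ext rfl
  right_inv s := by
    obtain ⟨⟨m, x⟩, hs⟩ := s
    obtain ⟨h, hx⟩ := Sigma.le_def.mp hs
    cases h
    rfl
  map_rel_iff' := by
    intro q q'
    simp only [Equiv.coe_fn_mk, Subtype.mk_le_mk]
    rw [Sigma.le_def]
    constructor
    · rintro ⟨h, hx⟩; simpa using hx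
    · intro h; exact ⟨rfl, h⟩

/-- the upper set of `(G.symm t).val` corresponds to the upper set of `t`. -/
def upFromSymm {P W : Type*} [PartialOrder P] [PartialOrder W] {u : P}
    (G : {y : P // u ≤ y} ≃o W) (t : W) :
    {y : P // (G.symm t).val ≤ y} ≃o {z : W // t ≤ z} where
  toFun y := ⟨G ⟨y.val, (G.symm t).prop.trans y.prop⟩, by
    have h : (G.symm t) ≤ ⟨y.val, (G.symm t).prop.trans y.prop⟩ := y.prop
    have := G.monotone h
    rwa [G.apply_symm_apply] at this⟩
  invFun z := ⟨(G.symm z.val).val, by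
    have h : G.symm t ≤ G.symm z.val := G.symm.monotone z.prop
    exact h⟩
  left_inv y := by
    apply Subtype.ext
    simp only
    rw [G.symm_apply_apply]
  right_inv z := by
    apply Subtype.ext
    simp only
    exact G.apply_symm_apply z.val
  map_rel_iff' := by
    intro y y'
    simp only [Equiv.coe_fn_mk, Subtype.mk_le_mk]
    rw [G.le_iff_le]
    rfl

end Iso

section Family
variable {V : Ordinal → Type} [inst : ∀ γ : Ordinal, PartialOrder (V γ)]
  {seq : Ordinal → ℕ → Ordinal}
  (hV0 : ∀ x y : V 0, x = y) (hV0ne : Nonempty (V 0))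
  (hseqsucc : ∀ γ : Ordinal, γ.card ≤ Cardinal.aleph0 → Order.IsSuccLimit γ →
    ∀ n : ℕ, ∃ δ : Ordinal, seq γ n = δ + 1)
  (hseqlt : ∀ γ : Ordinal, γ.card ≤ Cardinal.aleph0 → Order.IsSuccLimit γ → ∀ n : ℕ, seq γ n < γ)
  (hsucc : ∀ γ : Ordinal, γ.card ≤ Cardinal.aleph0 → (γ = 0 ∨ ∃ δ : Ordinal, γ = δ + 1) →
    Nonempty (V (γ + 1) ≃o WithBot (Σ _ : ℕ, V γ)))
  (hlimsucc : ∀ γ : Ordinal, γ.card ≤ Cardinal.aleph0 → Order.IsSuccLimit γ →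
    Nonempty (V (γ + 1) ≃o WithBot (V γ)))
  (hlim : ∀ γ : Ordinal, γ.card ≤ Cardinal.aleph0 → Order.IsSuccLimit γ →
    Nonempty (V γ ≃o (Σ n : ℕ, V (seq γ n))))

theorem card_pred {ξ : Ordinal} (h : (ξ + 1).card ≤ Cardinal.aleph0) :
    ξ.card ≤ Cardinal.aleph0 :=
  (Ordinal.card_le_card ((le_self_add : ξ ≤ ξ + 1))).trans h

theorem lt_self_add_one (ξ : Ordinal) : ξ < ξ + 1 := by
  rw [Ordinal.add_one_eq_succ]; exact Order.lt_succ ξ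

include hV0 hV0ne hsucc hlimsucc in
theorem exists_bot : ∀ ξ : Ordinal, ξ.card ≤ Cardinal.aleph0 →
    (ξ = 0 ∨ ∃ δ : Ordinal, ξ = δ + 1) → ∃ b : V ξ, ∀ x, b ≤ x := by
  rintro ξ hξc (rfl | ⟨δ, rfl⟩)
  · obtain ⟨b⟩ := hV0ne
    exact ⟨b, fun x => le_of_eq (hV0 b x)⟩
  · have hδc : δ.card ≤ Cardinal.aleph0 := card_pred hξc
    have hG : ∃ W : Type, ∃ _ : PartialOrder W, Nonempty (V (δ + 1) ≃o WithBot W) := by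
      rcases Ordinal.zero_or_succ_or_isSuccLimit δ with h0 | ⟨δ', hδ'⟩ | hl
      · exact ⟨Σ _ : ℕ, V δ, inferInstance, hsucc δ hδc (Or.inl h0)⟩
      · exact ⟨Σ _ : ℕ, V δ, inferInstance,
          hsucc δ hδc (Or.inr ⟨δ', by rw [← hδ', Ordinal.add_one_eq_succ]⟩)⟩
      · exact ⟨V δ, inferInstance, hlimsucc δ hδc hl⟩
    obtain ⟨W, _, ⟨G⟩⟩ := hG
    refine ⟨G.symm ⊥, fun x => ?_⟩
    have := G.symm.monotone (bot_le : ⊥ ≤ G x)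
    rwa [G.symm_apply_apply] at this

include hV0 hV0ne hsucc hlimsucc hseqlt hlim in
theorem V_nonempty : ∀ γ : Ordinal, γ.card ≤ Cardinal.aleph0 → Nonempty (V γ) := by
  intro γ
  induction γ using Ordinal.induction with
  | _ γ IH =>
  intro hγc
  rcases Ordinal.zero_or_succ_or_isSuccLimit γ with rfl | ⟨ξ, hξ⟩ | hl
  · exact hV0ne
  · have : γ = ξ + 1 := by rw [← hξ, Ordinal.add_one_eq_succ]
    subst this
    obtain ⟨b, -⟩ := exists_bot hV0 hV0ne hsucc hlimsucc (ξ + 1) hγc (Or.inr ⟨ξ, rfl⟩)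
    exact ⟨b⟩
  · obtain ⟨G⟩ := hlim γ hγc hl
    have h0 : seq γ 0 < γ := hseqlt γ hγc hl 0
    obtain ⟨x⟩ := IH (seq γ 0) h0 ((Ordinal.card_le_card (le_of_lt h0)).trans hγc)
    exact ⟨G.symm ⟨0, x⟩⟩

include hV0 hseqlt hsucc hlimsucc hlim in
theorem classify : ∀ η : Ordinal, η.card ≤ Cardinal.aleph0 → ∀ u : V η,
    ∃ ζ : Ordinal, ζ ≤ η ∧ (ζ = 0 ∨ ∃ δ : Ordinal, ζ = δ + 1) ∧
      Nonempty ({y : V η // u ≤ y} ≃o V ζ) := by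
  intro η
  induction η using Ordinal.induction with
  | _ η IH =>
  intro hηc u
  rcases Ordinal.zero_or_succ_or_isSuccLimit η with rfl | ⟨ξ, hξ⟩ | hl
  · exact ⟨0, le_rfl, Or.inl rfl,
      ⟨univIso (fun x => le_of_eq (hV0 u x))⟩⟩
  · have hη1 : η = ξ + 1 := by rw [← hξ, Ordinal.add_one_eq_succ]
    subst hη1
    have hξc : ξ.card ≤ Cardinal.aleph0 := card_pred hηc
    have hξlt : ξ < ξ + 1 := lt_self_add_one ξ
    have key : ∃ W : Type, ∃ _ : PartialOrder W,
        Nonempty (V (ξ + 1) ≃o WithBot W) ∧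
        (∀ p : W, ∃ ζ : Ordinal, ζ ≤ ξ ∧ (ζ = 0 ∨ ∃ δ : Ordinal, ζ = δ + 1) ∧
          Nonempty ({q : W // p ≤ q} ≃o V ζ)) := by
      by_cases h0s : ξ = 0 ∨ ∃ δ' : Ordinal, ξ = δ' + 1
      · obtain ⟨G⟩ := hsucc ξ hξc h0s
        refine ⟨Σ _ : ℕ, V ξ, inferInstance, ⟨G⟩, ?_⟩
        intro p
        obtain ⟨ζ, hζ, hz, ⟨J⟩⟩ := IH ξ hξlt hξc p.2
        refine ⟨ζ, hζ, hz, ⟨?_⟩⟩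
        have e1 : {q : (Σ _ : ℕ, V ξ) // p ≤ q} ≃o
            {s : (Σ _ : ℕ, V ξ) // (⟨p.1, p.2⟩ : Σ _ : ℕ, V ξ) ≤ s} :=
          predIso (fun s => Iff.rfl)
        have e2 : {s : (Σ _ : ℕ, V ξ) // (⟨p.1, p.2⟩ : Σ _ : ℕ, V ξ) ≤ s} ≃o
            {q : V ξ // p.2 ≤ q} := (sigmaUpIso (A := fun _ : ℕ => V ξ) p.1 p.2).symm
        exact e1.trans (e2.trans J)
      · have hlξ : Order.IsSuccLimit ξ := by
          rcases Ordinal.zero_or_succ_or_isSuccLimit ξ with h | ⟨δ', h⟩ | h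
          · exact absurd (Or.inl h) h0s
          · exact absurd (Or.inr ⟨δ', by rw [← h, Ordinal.add_one_eq_succ]⟩) h0s
          · exact h
        obtain ⟨G⟩ := hlimsucc ξ hξc hlξ
        refine ⟨V ξ, inferInstance, ⟨G⟩, ?_⟩
        intro p
        exact IH ξ hξlt hξc p
    obtain ⟨W, _, ⟨G⟩, hW⟩ := key
    have J1 : {y : V (ξ + 1) // u ≤ y} ≃o {z : WithBot W // G u ≤ z} :=
      subIso G (fun y => G.le_iff_le.symm)
    rcases hGu : G u with _ | p
    · refine ⟨ξ + 1, le_rfl, Or.inr ⟨ξ, rfl⟩, ⟨J1.trans ((univIso ?_).trans G.symm)⟩⟩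
      intro z; rw [hGu]; exact bot_le
    · obtain ⟨ζ, hζ, hz, ⟨J5⟩⟩ := hW p
      refine ⟨ζ, hζ.trans (le_of_lt hξlt), hz, ?_⟩
      have J2 : {z : WithBot W // G u ≤ z} ≃o {z : WithBot W // (p : WithBot W) ≤ z} :=
        predIso (fun z => by rw [hGu]; exact Iff.rfl)
      exact ⟨J1.trans (J2.trans ((coeUpIso p).trans J5))⟩
  · obtain ⟨G⟩ := hlim η hηc hl
    have hslt : seq η (G u).1 < η := hseqlt η hηc hl (G u).1
    have hsc : (seq η (G u).1).card ≤ Cardinal.aleph0 :=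
      (Ordinal.card_le_card (le_of_lt hslt)).trans hηc
    obtain ⟨ζ, hζ, hz, ⟨J5⟩⟩ := IH (seq η (G u).1) hslt hsc (G u).2
    refine ⟨ζ, hζ.trans (le_of_lt hslt), hz, ?_⟩
    have J1 : {y : V η // u ≤ y} ≃o {z : (Σ n, V (seq η n)) // G u ≤ z} :=
      subIso G (fun y => G.le_iff_le.symm)
    have J4 : {z : (Σ n, V (seq η n)) // G u ≤ z} ≃o {q : V (seq η (G u).1) // (G u).2 ≤ q} := by
      have e1 : {z : (Σ n, V (seq η n)) // G u ≤ z} ≃o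
          {s : (Σ n, V (seq η n)) // (⟨(G u).1, (G u).2⟩ : Σ n, V (seq η n)) ≤ s} :=
        predIso (fun s => Iff.rfl)
      have e2 : {s : (Σ n, V (seq η n)) // (⟨(G u).1, (G u).2⟩ : Σ n, V (seq η n)) ≤ s} ≃o
          {q : V (seq η (G u).1) // (G u).2 ≤ q} := (sigmaUpIso (A := fun n => V (seq η n)) (G u).1 (G u).2).symm
      exact e1.trans e2
    exact ⟨J1.trans (J4.trans J5)⟩


include hV0 hV0ne hsucc hlimsucc in
theorem cover_struct_succ {α : Ordinal} (ξ : Ordinal) (hξc : ξ.card ≤ Cardinal.aleph0)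
    (h0s : ξ = 0 ∨ ∃ δ : Ordinal, ξ = δ + 1)
    (u : V α) (F : {y : V α // u ≤ y} ≃o V (ξ + 1)) :
    ∃ c : ℕ → V α,
      Function.Injective c ∧
      (∀ n, u < c n) ∧
      (∀ n z, u < z → z < c n → False) ∧
      (∀ y, u < y → ∃ n, c n ≤ y) ∧
      (∀ n, Nonempty ({y : V α // c n ≤ y} ≃o V ξ)) := by
  obtain ⟨H⟩ := hsucc ξ hξc h0s
  obtain ⟨b, hb⟩ := exists_bot hV0 hV0ne hsucc hlimsucc ξ hξc h0s
  set G : {y : V α // u ≤ y} ≃o WithBot (Σ _ : ℕ, V ξ) := F.trans H with hGdef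
  have hGu : G ⟨u, le_rfl⟩ = ⊥ := by
    have h1 : (⟨u, le_rfl⟩ : {y : V α // u ≤ y}) ≤ G.symm ⊥ := (G.symm ⊥).prop
    have h2 := G.monotone h1
    rw [G.apply_symm_apply] at h2
    exact le_bot_iff.mp h2
  have hne : ∀ y : {y : V α // u ≤ y}, u < y.val ↔ G y ≠ ⊥ := by
    intro y
    constructor
    · intro hy hbot
      have h1 : G y = G ⟨u, le_rfl⟩ := by rw [hGu, hbot]
      have h2 := congrArg Subtype.val (G.injective h1)
      simp only at h2
      rw [h2] at hy
      exact lt_irrefl u hy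
    · intro hbot
      rcases eq_or_lt_of_le y.prop with h | h
      · exfalso
        apply hbot
        rw [show y = ⟨u, le_rfl⟩ from Subtype.ext h.symm]
        exact hGu
      · exact h
  refine ⟨fun n => (G.symm ((⟨n, b⟩ : Σ _ : ℕ, V ξ) : WithBot (Σ _ : ℕ, V ξ))).val,
    ?_, ?_, ?_, ?_, ?_⟩
  · intro n m h
    have h1 := G.symm.injective (Subtype.ext h)
    have h2 := WithBot.coe_injective h1
    exact congrArg Sigma.fst h2
  · intro n
    exact (hne _).mpr (by rw [G.apply_symm_apply]; exact WithBot.coe_ne_bot)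
  · intro n z hz1 hz2
    have hzz : (⟨z, le_of_lt hz1⟩ : {y : V α // u ≤ y}) <
        G.symm ((⟨n, b⟩ : Σ _ : ℕ, V ξ) : WithBot (Σ _ : ℕ, V ξ)) := by
      exact Subtype.coe_lt_coe.mp hz2
    have h3 : G ⟨z, le_of_lt hz1⟩ < ((⟨n, b⟩ : Σ _ : ℕ, V ξ) : WithBot (Σ _ : ℕ, V ξ)) := by
      have := G.lt_iff_lt.mpr hzz
      rwa [G.apply_symm_apply] at this
    have h4 : G ⟨z, le_of_lt hz1⟩ ≠ ⊥ := (hne _).mp hz1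
    obtain ⟨s, hs⟩ := WithBot.ne_bot_iff_exists.mp h4
    rw [← hs] at h3
    have h5 : s < (⟨n, b⟩ : Σ _ : ℕ, V ξ) := WithBot.coe_lt_coe.mp h3
    obtain ⟨h6, h7⟩ := Sigma.lt_def.mp h5
    obtain ⟨m, q⟩ := s
    simp only at h6
    cases h6
    simp only at h7
    exact absurd (hb q) (not_le_of_gt h7)
  · intro y hy
    have h4 : G ⟨y, le_of_lt hy⟩ ≠ ⊥ := (hne _).mp hy
    obtain ⟨s, hs⟩ := WithBot.ne_bot_iff_exists.mp h4
    refine ⟨s.1, ?_⟩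
    have h5 : ((⟨s.1, b⟩ : Σ _ : ℕ, V ξ) : WithBot (Σ _ : ℕ, V ξ)) ≤ (s : WithBot (Σ _ : ℕ, V ξ)) :=
      WithBot.coe_le_coe.mpr (Sigma.le_def.mpr ⟨rfl, hb s.2⟩)
    have h6 := G.symm.monotone (hs ▸ h5)
    rw [G.symm_apply_apply] at h6
    exact h6
  · intro n
    refine ⟨(upFromSymm G _).trans ((coeUpIso (⟨n, b⟩ : Σ _ : ℕ, V ξ)).trans
      (((sigmaUpIso (A := fun _ : ℕ => V ξ) n b).symm).trans (univIso hb)))⟩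

include hV0 hV0ne hsucc hlimsucc hseqsucc hseqlt hlim in
theorem cover_struct_limit {α : Ordinal} (ξ : Ordinal) (hξc : ξ.card ≤ Cardinal.aleph0)
    (hl : Order.IsSuccLimit ξ)
    (u : V α) (F : {y : V α // u ≤ y} ≃o V (ξ + 1)) :
    ∃ c : ℕ → V α,
      Function.Injective c ∧
      (∀ n, u < c n) ∧
      (∀ n z, u < z → z < c n → False) ∧
      (∀ y, u < y → ∃ n, c n ≤ y) ∧
      (∀ n, Nonempty ({y : V α // c n ≤ y} ≃o V (seq ξ n))) := by
  obtain ⟨H⟩ := hlimsucc ξ hξc hl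
  obtain ⟨H2⟩ := hlim ξ hξc hl
  have hcard : ∀ n, (seq ξ n).card ≤ Cardinal.aleph0 :=
    fun n => (Ordinal.card_le_card (le_of_lt (hseqlt ξ hξc hl n))).trans hξc
  have hbase : ∀ n : ℕ, ∃ b : V (seq ξ n), ∀ x, b ≤ x := by
    intro n
    obtain ⟨δ, hδ⟩ := hseqsucc ξ hξc hl n
    exact exists_bot hV0 hV0ne hsucc hlimsucc (seq ξ n) (hcard n) (Or.inr ⟨δ, hδ⟩)
  choose b hb using hbase
  set G : {y : V α // u ≤ y} ≃o WithBot (V ξ) := F.trans H with hGdef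
  have hGu : G ⟨u, le_rfl⟩ = ⊥ := by
    have h1 : (⟨u, le_rfl⟩ : {y : V α // u ≤ y}) ≤ G.symm ⊥ := (G.symm ⊥).prop
    have h2 := G.monotone h1
    rw [G.apply_symm_apply] at h2
    exact le_bot_iff.mp h2
  have hne : ∀ y : {y : V α // u ≤ y}, u < y.val ↔ G y ≠ ⊥ := by
    intro y
    constructor
    · intro hy hbot
      have h1 : G y = G ⟨u, le_rfl⟩ := by rw [hGu, hbot]
      have h2 := congrArg Subtype.val (G.injective h1)
      simp only at h2
      rw [h2] at hy
      exact lt_irrefl u hy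
    · intro hbot
      rcases eq_or_lt_of_le y.prop with h | h
      · exfalso
        apply hbot
        rw [show y = ⟨u, le_rfl⟩ from Subtype.ext h.symm]
        exact hGu
      · exact h
  refine ⟨fun n => (G.symm ((H2.symm ⟨n, b n⟩ : V ξ) : WithBot (V ξ))).val,
    ?_, ?_, ?_, ?_, ?_⟩
  · intro n m h
    have h1 := G.symm.injective (Subtype.ext h)
    have h2 := H2.symm.injective (WithBot.coe_injective h1)
    exact congrArg Sigma.fst h2
  · intro n
    exact (hne _).mpr (by rw [G.apply_symm_apply]; exact WithBot.coe_ne_bot)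
  · intro n z hz1 hz2
    have hzz : (⟨z, le_of_lt hz1⟩ : {y : V α // u ≤ y}) <
        G.symm ((H2.symm ⟨n, b n⟩ : V ξ) : WithBot (V ξ)) := Subtype.coe_lt_coe.mp hz2
    have h3 : G ⟨z, le_of_lt hz1⟩ < ((H2.symm ⟨n, b n⟩ : V ξ) : WithBot (V ξ)) := by
      have := G.lt_iff_lt.mpr hzz
      rwa [G.apply_symm_apply] at this
    have h4 : G ⟨z, le_of_lt hz1⟩ ≠ ⊥ := (hne _).mp hz1
    obtain ⟨p, hp⟩ := WithBot.ne_bot_iff_exists.mp h4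
    rw [← hp] at h3
    have h5 : p < H2.symm ⟨n, b n⟩ := WithBot.coe_lt_coe.mp h3
    have h6 : H2 p < (⟨n, b n⟩ : Σ m, V (seq ξ m)) := by
      have := H2.lt_iff_lt.mpr h5
      rwa [H2.apply_symm_apply] at this
    obtain ⟨h7, h8⟩ := Sigma.lt_def.mp h6
    simp only at h7
    subst h7
    simp only at h8
    exact absurd (hb _ (H2 p).2) (not_le_of_gt h8)
  · intro y hy
    have h4 : G ⟨y, le_of_lt hy⟩ ≠ ⊥ := (hne _).mp hy
    obtain ⟨p, hp⟩ := WithBot.ne_bot_iff_exists.mp h4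
    refine ⟨(H2 p).1, ?_⟩
    have h5 : (⟨(H2 p).1, b (H2 p).1⟩ : Σ m, V (seq ξ m)) ≤ H2 p :=
      Sigma.le_def.mpr ⟨rfl, hb _ (H2 p).2⟩
    have h6 : H2.symm ⟨(H2 p).1, b (H2 p).1⟩ ≤ p := by
      have := H2.symm.monotone h5
      rwa [H2.symm_apply_apply] at this
    have h7 : ((H2.symm ⟨(H2 p).1, b (H2 p).1⟩ : V ξ) : WithBot (V ξ)) ≤
        ((p : V ξ) : WithBot (V ξ)) := WithBot.coe_le_coe.mpr h6
    have h8 := G.symm.monotone (hp ▸ h7)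
    rw [G.symm_apply_apply] at h8
    exact h8
  · intro n
    have e3 : {p : V ξ // H2.symm ⟨n, b n⟩ ≤ p} ≃o
        {s : Σ m, V (seq ξ m) // (⟨n, b n⟩ : Σ m, V (seq ξ m)) ≤ s} := by
      refine subIso H2 (fun p => ?_)
      constructor
      · intro h
        have := H2.monotone h
        rwa [H2.apply_symm_apply] at this
      · intro h
        have := H2.symm.monotone h
        rwa [H2.symm_apply_apply] at this
    have e4 : {s : Σ m, V (seq ξ m) // (⟨n, b n⟩ : Σ m, V (seq ξ m)) ≤ s} ≃o
        {q : V (seq ξ n) // b n ≤ q} := (sigmaUpIso (A := fun m => V (seq ξ m)) n (b n)).symm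
    exact ⟨(upFromSymm G _).trans ((coeUpIso (H2.symm ⟨n, b n⟩)).trans
      (e3.trans (e4.trans (univIso (hb n)))))⟩

end Family

section Main
variable {V : Ordinal → Type} [inst : ∀ γ : Ordinal, PartialOrder (V γ)]
  {seq : Ordinal → ℕ → Ordinal}
  (hV0 : ∀ x y : V 0, x = y) (hV0ne : Nonempty (V 0))
  (hseqmono : ∀ γ : Ordinal, γ.card ≤ Cardinal.aleph0 → Order.IsSuccLimit γ → StrictMono (seq γ))
  (hseqsucc : ∀ γ : Ordinal, γ.card ≤ Cardinal.aleph0 → Order.IsSuccLimit γ →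
    ∀ n : ℕ, ∃ δ : Ordinal, seq γ n = δ + 1)
  (hseqlt : ∀ γ : Ordinal, γ.card ≤ Cardinal.aleph0 → Order.IsSuccLimit γ → ∀ n : ℕ, seq γ n < γ)
  (hseqcof : ∀ γ : Ordinal, γ.card ≤ Cardinal.aleph0 → Order.IsSuccLimit γ →
    ∀ δ : Ordinal, δ < γ → ∃ n : ℕ, δ < seq γ n)
  (hsucc : ∀ γ : Ordinal, γ.card ≤ Cardinal.aleph0 → (γ = 0 ∨ ∃ δ : Ordinal, γ = δ + 1) →
    Nonempty (V (γ + 1) ≃o WithBot (Σ _ : ℕ, V γ)))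
  (hlimsucc : ∀ γ : Ordinal, γ.card ≤ Cardinal.aleph0 → Order.IsSuccLimit γ →
    Nonempty (V (γ + 1) ≃o WithBot (V γ)))
  (hlim : ∀ γ : Ordinal, γ.card ≤ Cardinal.aleph0 → Order.IsSuccLimit γ →
    Nonempty (V γ ≃o (Σ n : ℕ, V (seq γ n))))
  {α : Ordinal} (hαc : α.card ≤ Cardinal.aleph0)
  (hfin : ∀ x : V α, {y : V α | y ≤ x}.Finite)
  (hlin : ∀ x y z : V α, y ≤ x → z ≤ x → y ≤ z ∨ z ≤ y)

include hV0 hV0ne hseqmono hseqsucc hseqlt hseqcof hsucc hlimsucc hlim hαc hfin hlin in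
theorem main_lemma :
    ∀ ζ : Ordinal, ζ ≤ α → ∀ u : V α,
      Nonempty ({y : V α // u ≤ y} ≃o V ζ) →
      (∀ δ : Ordinal, δ < ζ → ∃ y : V α, u < y ∧ y ∈ derIter (Set.univ : Set (V α)) δ) ∧
      (∀ δ : Ordinal, ζ ≤ δ → ∀ y : V α, u < y → y ∉ derIter (Set.univ : Set (V α)) δ) := by
  intro ζ
  induction ζ using Ordinal.induction with
  | _ ζ IH =>
  intro hζα u hFne
  obtain ⟨F⟩ := hFne
  have hζc : ζ.card ≤ Cardinal.aleph0 := (Ordinal.card_le_card hζα).trans hαc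
  rcases Ordinal.zero_or_succ_or_isSuccLimit ζ with rfl | ⟨ξ, hξ⟩ | hl
  · -- ζ = 0 : no interior at all
    have hnoy : ∀ y : V α, ¬ u < y := by
      intro y hy
      have h1 : F ⟨y, le_of_lt hy⟩ = F ⟨u, le_rfl⟩ := hV0 _ _
      have h2 := congrArg Subtype.val (F.injective h1)
      simp only at h2
      rw [h2] at hy
      exact lt_irrefl u hy
    exact ⟨fun δ hδ => absurd hδ (by simp),
      fun δ _ y hy => absurd hy (hnoy y)⟩
  · -- ζ = ξ + 1
    have hζ1 : ζ = ξ + 1 := by rw [← hξ, Ordinal.add_one_eq_succ]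
    subst hζ1
    have hξc : ξ.card ≤ Cardinal.aleph0 := card_pred hζc
    have hbundle : ∃ (c : ℕ → V α) (ords : ℕ → Ordinal),
        Function.Injective c ∧ (∀ n, u < c n) ∧ (∀ n z, u < z → z < c n → False) ∧
        (∀ y, u < y → ∃ n, c n ≤ y) ∧
        (∀ n, Nonempty ({y : V α // c n ≤ y} ≃o V (ords n))) ∧
        (∀ n, ords n ≤ ξ) ∧
        (∀ σ : Ordinal, {m : ℕ | ords m ≤ σ}.Infinite → ξ ≤ σ) := by
      by_cases h0s : ξ = 0 ∨ ∃ δ' : Ordinal, ξ = δ' + 1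
      · obtain ⟨c, h1, h2, h3, h4, h5⟩ :=
          cover_struct_succ hV0 hV0ne hsucc hlimsucc ξ hξc h0s u F
        exact ⟨c, fun _ => ξ, h1, h2, h3, h4, h5, fun _ => le_rfl,
          fun σ hinf => by obtain ⟨m, hm⟩ := hinf.nonempty; exact hm⟩
      · have hlξ : Order.IsSuccLimit ξ := by
          rcases Ordinal.zero_or_succ_or_isSuccLimit ξ with h | ⟨δ', h⟩ | h
          · exact absurd (Or.inl h) h0s
          · exact absurd (Or.inr ⟨δ', by rw [← h, Ordinal.add_one_eq_succ]⟩) h0s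
          · exact h
        obtain ⟨c, h1, h2, h3, h4, h5⟩ :=
          cover_struct_limit hV0 hV0ne hseqsucc hseqlt hsucc hlimsucc hlim ξ hξc hlξ u F
        refine ⟨c, seq ξ, h1, h2, h3, h4, h5,
          fun n => le_of_lt (hseqlt ξ hξc hlξ n), ?_⟩
        intro σ hinf
        by_contra hcon
        push_neg at hcon
        obtain ⟨k, hk⟩ := hseqcof ξ hξc hlξ σ hcon
        obtain ⟨m, hm, hkm⟩ := hinf.exists_gt k
        exact lt_irrefl σ (hk.trans ((hseqmono ξ hξc hlξ hkm).trans_le hm))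
    obtain ⟨c, ords, hinj, hclt, hcov, hall, hiso, hordle, hbig⟩ := hbundle
    have hξα : ξ ≤ α := (le_of_lt (lt_self_add_one ξ)).trans hζα
    have Mc : ∀ n,
        (∀ δ : Ordinal, δ < ords n →
          ∃ y : V α, c n < y ∧ y ∈ derIter (Set.univ : Set (V α)) δ) ∧
        (∀ δ : Ordinal, ords n ≤ δ → ∀ y : V α, c n < y →
          y ∉ derIter (Set.univ : Set (V α)) δ) := by
      intro n
      exact IH (ords n) ((hordle n).trans_lt (lt_self_add_one ξ))
        ((hordle n).trans hξα) (c n) (hiso n)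
    have halive : ∀ n (δ : Ordinal), δ ≤ ξ → c n ∈ derIter (Set.univ : Set (V α)) δ := by
      intro n δ hδ
      by_contra hdead
      obtain ⟨σ, hσδ, hxσ, hterm, u0, hu0, hinf⟩ := death_succ hfin hdead
      have hu0u : u0 = u := by
        have huσ : u ∈ derIter (Set.univ : Set (V α)) σ :=
          derIter_dc hfin σ (c n) u (le_of_lt (hclt n)) hxσ
        rcases hlin (c n) u0 u (le_of_lt hu0.2.2.1) (le_of_lt (hclt n)) with h | h
        · rcases eq_or_lt_of_le h with h' | h'
          · exact h'
          · exact absurd ⟨h', hclt n⟩ (hu0.2.2.2 u huσ)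
        · rcases eq_or_lt_of_le h with h' | h'
          · exact h'.symm
          · exact absurd (hcov n u0 h' hu0.2.2.1) not_false
      rw [hu0u] at hinf
      have hsub : {y | UpNbrIn (derIter (Set.univ : Set (V α)) σ) u y ∧
          TerminalIn (derIter (Set.univ : Set (V α)) σ) y} ⊆
          c '' {m : ℕ | TerminalIn (derIter (Set.univ : Set (V α)) σ) (c m)} := by
        rintro y ⟨hy1, hy2⟩
        have hcb : u ⋖ y := upnbr_covby hfin hy1
        obtain ⟨m, hm⟩ := hall y hy1.2.2.1
        rcases eq_or_lt_of_le hm with rfl | h'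
        · exact ⟨m, hy2, rfl⟩
        · exact absurd h' (hcb.2 (hclt m))
      have hMinf : {m : ℕ | TerminalIn (derIter (Set.univ : Set (V α)) σ) (c m)}.Infinite :=
        Set.Infinite.of_image c (hinf.mono hsub)
      have hMle : {m : ℕ | TerminalIn (derIter (Set.univ : Set (V α)) σ) (c m)} ⊆
          {m : ℕ | ords m ≤ σ} := by
        intro m hm
        by_contra hgt
        simp only [Set.mem_setOf_eq, not_le] at hgt
        obtain ⟨y, hy1, hy2⟩ := (Mc m).1 σ hgt
        exact ((terminal_iff hfin).mp hm).2 y hy1 hy2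
      have hbig2 : ξ ≤ σ := hbig σ (hMinf.mono hMle)
      exact lt_irrefl σ ((lt_self_add_one σ).trans_le (hσδ.trans (hδ.trans hbig2)))
    have hterm_all : ∀ n, TerminalIn (derIter (Set.univ : Set (V α)) ξ) (c n) := by
      intro n
      exact (terminal_iff hfin).mpr ⟨halive n ξ le_rfl,
        fun y hy => (Mc n).2 ξ (hordle n) y hy⟩
    constructor
    · intro δ hδ
      have hδξ : δ ≤ ξ := by
        rw [Ordinal.add_one_eq_succ] at hδ
        exact Order.lt_succ_iff.mp hδ
      exact ⟨c 0, hclt 0, halive 0 δ hδξ⟩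
    · intro δ hδ y hy
      obtain ⟨n, hn⟩ := hall y hy
      have hξδ : ξ ≤ δ := (le_of_lt (lt_self_add_one ξ)).trans hδ
      rcases eq_or_lt_of_le hn with rfl | hlt2
      · -- y = c n
        intro hmem
        have hmem1 : c n ∈ derIter (Set.univ : Set (V α)) (ξ + 1) :=
          derIter_anti _ hδ hmem
        rw [derIter_succ] at hmem1
        have huDξ : u ∈ derIter (Set.univ : Set (V α)) ξ :=
          derIter_dc hfin ξ (c n) u (le_of_lt (hclt n)) (halive n ξ le_rfl)
        refine hmem1.2 ⟨hterm_all n, u, ⟨huDξ, halive n ξ le_rfl, hclt n,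
          fun z _ hcon => hcov n z hcon.1 hcon.2⟩, ?_⟩
        exact Set.infinite_of_injective_forall_mem hinj
          (fun m => ⟨⟨huDξ, halive m ξ le_rfl, hclt m,
            fun z _ hcon => hcov m z hcon.1 hcon.2⟩, hterm_all m⟩)
      · exact (Mc n).2 δ ((hordle n).trans hξδ) y hlt2
  · -- ζ limit : impossible, V ζ has no minimum
    exfalso
    have hmin : ∀ x : V ζ, F ⟨u, le_rfl⟩ ≤ x := by
      intro x
      have h1 : (⟨u, le_rfl⟩ : {y : V α // u ≤ y}) ≤ F.symm x := (F.symm x).prop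
      have h2 := F.monotone h1
      rwa [F.apply_symm_apply] at h2
    obtain ⟨K⟩ := hlim ζ hζc hl
    set n0 : ℕ := (K (F ⟨u, le_rfl⟩)).1 with hn0
    have hnext : (seq ζ (n0 + 1)).card ≤ Cardinal.aleph0 :=
      (Ordinal.card_le_card (le_of_lt (hseqlt ζ hζc hl (n0 + 1)))).trans hζc
    obtain ⟨x0⟩ := V_nonempty hV0 hV0ne hseqlt hsucc hlimsucc hlim (seq ζ (n0 + 1)) hnext
    have h3 : K (F ⟨u, le_rfl⟩) ≤ ⟨n0 + 1, x0⟩ := by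
      have := K.monotone (hmin (K.symm ⟨n0 + 1, x0⟩))
      rwa [K.apply_symm_apply] at this
    obtain ⟨h4, -⟩ := Sigma.le_def.mp h3
    simp only at h4
    rw [← hn0] at h4
    exact Nat.succ_ne_self n0 h4.symm

end Main


theorem statement9
    (V : Ordinal → Type) [∀ γ : Ordinal, PartialOrder (V γ)]
    (seq : Ordinal → ℕ → Ordinal)
    (hV0 : ∀ x y : V 0, x = y) (hV0ne : Nonempty (V 0))
    (hchainfin : ∀ γ : Ordinal, γ.card ≤ Cardinal.aleph0 → ∀ x : V γ, {y : V γ | y ≤ x}.Finite)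
    (hchainlin : ∀ γ : Ordinal, γ.card ≤ Cardinal.aleph0 →
      ∀ x y w : V γ, y ≤ x → w ≤ x → y ≤ w ∨ w ≤ y)
    (hseqmono : ∀ γ : Ordinal, γ.card ≤ Cardinal.aleph0 → Order.IsSuccLimit γ → StrictMono (seq γ))
    (hseqsucc : ∀ γ : Ordinal, γ.card ≤ Cardinal.aleph0 → Order.IsSuccLimit γ →
      ∀ n : ℕ, ∃ δ : Ordinal, seq γ n = δ + 1)
    (hseqlt : ∀ γ : Ordinal, γ.card ≤ Cardinal.aleph0 → Order.IsSuccLimit γ → ∀ n : ℕ, seq γ n < γ)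
    (hseqcof : ∀ γ : Ordinal, γ.card ≤ Cardinal.aleph0 → Order.IsSuccLimit γ →
      ∀ δ : Ordinal, δ < γ → ∃ n : ℕ, δ < seq γ n)
    (hsucc : ∀ γ : Ordinal, γ.card ≤ Cardinal.aleph0 → (γ = 0 ∨ ∃ δ : Ordinal, γ = δ + 1) →
      Nonempty (V (γ + 1) ≃o WithBot (Σ _ : ℕ, V γ)))
    (hlimsucc : ∀ γ : Ordinal, γ.card ≤ Cardinal.aleph0 → Order.IsSuccLimit γ →
      Nonempty (V (γ + 1) ≃o WithBot (V γ)))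
    (hlim : ∀ γ : Ordinal, γ.card ≤ Cardinal.aleph0 → Order.IsSuccLimit γ →
      Nonempty (V γ ≃o (Σ n : ℕ, V (seq γ n))))
    {Z : Type*} [NormedAddCommGroup Z] [NormedSpace ℝ Z] [CompleteSpace Z]
    (z : ℕ → Z) (zs : ℕ → StrongDual ℝ Z) (C K : ℝ)
    (hz1 : ∀ i : ℕ, 1 ≤ ‖z i‖)
    (hzC : ∀ k : ℕ, ‖∑ i ∈ Finset.range k, z i‖ ≤ C)
    (hbasic : ∀ m n : ℕ, m ≤ n → ∀ a : ℕ → ℝ,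
      ‖∑ i ∈ Finset.range m, a i • z i‖ ≤ K * ‖∑ i ∈ Finset.range n, a i • z i‖)
    (hspan : (Submodule.span ℝ (Set.range z)).topologicalClosure = ⊤)
    (hbi : ∀ i j : ℕ, zs j (z i) = if i = j then (1 : ℝ) else 0)
    (α : Ordinal) (hαc : α.card ≤ Cardinal.aleph0)
    (e : V α → ℕ) (heinj : Function.Injective e)
    (hemono : ∀ x y : V α, x < y → e x < e y)
    (hepos : ∀ x : V α, e x ≠ 0)
    (β : Ordinal) (hβ : β < α)
    (v w : V α) (hv : ¬∃ y, v ⋖ y) (hw : ¬∃ y, w ⋖ y)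
    (γ : Ordinal) (hγ : γ ≤ β) :
    ¬(e '' ({u | u ≤ w} ∩ derIter (Set.univ : Set (V α)) γ)
        ⊂ e '' ({u | u ≤ v} ∩ derIter (Set.univ : Set (V α)) (β + 1))) := by
    intro hss
    have hfin := hchainfin α hαc
    have hlin := hchainlin α hαc
    have hsub : {u : V α | u ≤ w} ∩ derIter Set.univ γ ⊆
        {u : V α | u ≤ v} ∩ derIter Set.univ (β + 1) :=
      (Set.image_subset_image_iff heinj).mp hss.subset
    have hne : {u : V α | u ≤ w} ∩ derIter Set.univ γ ≠
        {u : V α | u ≤ v} ∩ derIter Set.univ (β + 1) := by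
      intro h
      have himg : e '' ({u : V α | u ≤ w} ∩ derIter Set.univ γ) =
          e '' ({u : V α | u ≤ v} ∩ derIter Set.univ (β + 1)) := by rw [h]
      exact hss.2 himg.symm.subset
    have hγβ1 : γ ≤ β + 1 := hγ.trans ((le_self_add : β ≤ β + 1))
    -- a minimal vertex below `w` survives forever
    obtain ⟨r, hrw, hrmin⟩ := fin_exists_minimal_wrt (hfin w) ⟨w, le_rfl⟩
    have hrgmin : ∀ z : V α, ¬ z < r := fun z hz =>
      absurd (hrmin z (le_of_lt (hz.trans_le hrw)) (le_of_lt hz)) (ne_of_gt hz)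
    have hrSw : r ∈ {u : V α | u ≤ w} ∩ derIter Set.univ γ :=
      ⟨hrw, minimal_mem_derIter hfin hrgmin γ⟩
    -- maxima of the two supports
    have hSwfin : ({u : V α | u ≤ w} ∩ derIter Set.univ γ).Finite :=
      (hfin w).subset Set.inter_subset_left
    obtain ⟨w', hw'mem, hw'max⟩ := fin_exists_maximal_wrt hSwfin ⟨r, hrSw⟩
    have hw'ub : ∀ s ∈ {u : V α | u ≤ w} ∩ derIter Set.univ γ, s ≤ w' := by
      intro s hs
      rcases hlin w s w' hs.1 hw'mem.1 with h | h
      · exact h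
      · exact le_of_eq (hw'max s hs h).symm
    have hSvfin : ({u : V α | u ≤ v} ∩ derIter Set.univ (β + 1)).Finite :=
      (hfin v).subset Set.inter_subset_left
    obtain ⟨m, hmmem, hmmax⟩ := fin_exists_maximal_wrt hSvfin ⟨w', hsub hw'mem⟩
    have hmub : ∀ s ∈ {u : V α | u ≤ v} ∩ derIter Set.univ (β + 1), s ≤ m := by
      intro s hs
      rcases hlin v s m hs.1 hmmem.1 with h | h
      · exact h
      · exact le_of_eq (hmmax s hs h).symm
    have hw'm : w' ≤ m := hmub w' (hsub hw'mem)
    have hw'nem : w' ≠ m := by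
      intro h
      apply hne
      apply Set.Subset.antisymm hsub
      intro s hs
      have hsm : s ≤ w' := h ▸ hmub s hs
      exact ⟨hsm.trans hw'mem.1, derIter_anti _ hγβ1 hs.2⟩
    have hw'ltm : w' < m := lt_of_le_of_ne hw'm hw'nem
    have hw'w : w' < w := by
      rcases eq_or_lt_of_le (hw'mem.1 : w' ≤ w) with h | h
      · exfalso
        obtain ⟨t, ht, -⟩ := exists_covby_le hfin (show w < m from h ▸ hw'ltm)
        exact hw ⟨t, ht⟩
      · exact h
    -- the deleted cover `c` of `w'` towards `w`
    obtain ⟨c, hc_cov, hcw⟩ := exists_covby_le hfin hw'w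
    have hcnotD : c ∉ derIter Set.univ γ := by
      intro hcD
      exact absurd (hw'ub c ⟨hcw, hcD⟩) (not_le_of_gt hc_cov.1)
    obtain ⟨σ, hσγ, hcσ, hcterm, u0, hu0, hinf⟩ := death_succ hfin hcnotD
    have hσleγ : σ ≤ γ := le_of_lt ((lt_self_add_one σ).trans_le hσγ)
    have hw'Dσ : w' ∈ derIter Set.univ σ := derIter_anti _ hσleγ hw'mem.2
    have hu0w' : u0 = w' := by
      rcases hlin c u0 w' (le_of_lt hu0.2.2.1) (le_of_lt hc_cov.1) with h | h
      · rcases eq_or_lt_of_le h with h' | h'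
        · exact h'
        · exact absurd ⟨h', hc_cov.1⟩ (hu0.2.2.2 w' hw'Dσ)
      · rcases eq_or_lt_of_le h with h' | h'
        · exact h'.symm
        · exact absurd hu0.2.2.1 (hc_cov.2 h')
    rw [hu0w'] at hinf
    -- the surviving cover `t` of `w'` towards `m`
    obtain ⟨t, ht_cov, htm⟩ := exists_covby_le hfin hw'ltm
    have htD : t ∈ derIter Set.univ (β + 1) := derIter_dc hfin _ m t htm hmmem.2
    have htDσ1 : t ∈ derIter Set.univ (σ + 1) := by
      refine derIter_anti _ ?_ htD
      calc σ + 1 ≤ γ := hσγ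
        _ ≤ β + 1 := hγβ1
    have htDσ : t ∈ derIter Set.univ σ :=
      derIter_anti _ (le_of_lt (lt_self_add_one σ)) htDσ1
    -- classify `w'`
    obtain ⟨ζ0, hζ0α, hζ0s, ⟨F⟩⟩ := classify hV0 hseqlt hsucc hlimsucc hlim α hαc w'
    rcases hζ0s with rfl | ⟨ξ, rfl⟩
    · -- impossible: the up-set of `w'` would be a single point, but `c` is above it
      have h1 : F ⟨c, le_of_lt hc_cov.1⟩ = F ⟨w', le_rfl⟩ := hV0 _ _
      have h2 := congrArg Subtype.val (F.injective h1)
      simp only at h2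
      exact (ne_of_gt hc_cov.1) h2
    · have hζ0c : (ξ + 1).card ≤ Cardinal.aleph0 :=
        (Ordinal.card_le_card hζ0α).trans hαc
      have hξc : ξ.card ≤ Cardinal.aleph0 := card_pred hζ0c
      have hξα : ξ ≤ α := (le_of_lt (lt_self_add_one ξ)).trans hζ0α
      have hbundle : ∃ (cs : ℕ → V α) (ords : ℕ → Ordinal),
          Function.Injective cs ∧ (∀ n, w' < cs n) ∧
          (∀ n z, w' < z → z < cs n → False) ∧
          (∀ y, w' < y → ∃ n, cs n ≤ y) ∧
          (∀ n, Nonempty ({y : V α // cs n ≤ y} ≃o V (ords n))) ∧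
          (∀ n, ords n ≤ ξ) ∧
          (∀ σ' : Ordinal, {m' : ℕ | ords m' ≤ σ'}.Infinite → ξ ≤ σ') := by
        by_cases h0s : ξ = 0 ∨ ∃ δ' : Ordinal, ξ = δ' + 1
        · obtain ⟨cs, h1, h2, h3, h4, h5⟩ :=
            cover_struct_succ hV0 hV0ne hsucc hlimsucc ξ hξc h0s w' F
          exact ⟨cs, fun _ => ξ, h1, h2, h3, h4, h5, fun _ => le_rfl,
            fun σ' hinf' => by obtain ⟨m', hm'⟩ := hinf'.nonempty; exact hm'⟩
        · have hlξ : Order.IsSuccLimit ξ := by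
            rcases Ordinal.zero_or_succ_or_isSuccLimit ξ with h | ⟨δ', h⟩ | h
            · exact absurd (Or.inl h) h0s
            · exact absurd (Or.inr ⟨δ', by rw [← h, Ordinal.add_one_eq_succ]⟩) h0s
            · exact h
          obtain ⟨cs, h1, h2, h3, h4, h5⟩ :=
            cover_struct_limit hV0 hV0ne hseqsucc hseqlt hsucc hlimsucc hlim ξ hξc hlξ w' F
          refine ⟨cs, seq ξ, h1, h2, h3, h4, h5,
            fun n => le_of_lt (hseqlt ξ hξc hlξ n), ?_⟩
          intro σ' hinf'
          by_contra hcon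
          push_neg at hcon
          obtain ⟨k, hk⟩ := hseqcof ξ hξc hlξ σ' hcon
          obtain ⟨m', hm', hkm'⟩ := hinf'.exists_gt k
          exact lt_irrefl σ' (hk.trans ((hseqmono ξ hξc hlξ hkm').trans_le hm'))
      obtain ⟨cs, ords, hinj, hclt, hcov2, hall, hiso, hordle, hbig⟩ := hbundle
      have M : ∀ n,
          (∀ δ : Ordinal, δ < ords n →
            ∃ y : V α, cs n < y ∧ y ∈ derIter (Set.univ : Set (V α)) δ) ∧
          (∀ δ : Ordinal, ords n ≤ δ → ∀ y : V α, cs n < y →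
            y ∉ derIter (Set.univ : Set (V α)) δ) := by
        intro n
        exact main_lemma hV0 hV0ne hseqmono hseqsucc hseqlt hseqcof hsucc hlimsucc hlim
          hαc hfin hlin (ords n) ((hordle n).trans hξα) (cs n) (hiso n)
      -- the terminal up-neighbors of `w'` at stage `σ` are among the covers `cs`
      have hsub2 : {y | UpNbrIn (derIter (Set.univ : Set (V α)) σ) w' y ∧
          TerminalIn (derIter (Set.univ : Set (V α)) σ) y} ⊆
          cs '' {m' : ℕ | TerminalIn (derIter (Set.univ : Set (V α)) σ) (cs m')} := by
        rintro y ⟨hy1, hy2⟩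
        have hcb : w' ⋖ y := upnbr_covby hfin hy1
        obtain ⟨m', hm'⟩ := hall y hy1.2.2.1
        rcases eq_or_lt_of_le hm' with rfl | h'
        · exact ⟨m', hy2, rfl⟩
        · exact absurd h' (hcb.2 (hclt m'))
      have hMinf : {m' : ℕ | TerminalIn (derIter (Set.univ : Set (V α)) σ) (cs m')}.Infinite :=
        Set.Infinite.of_image cs (hinf.mono hsub2)
      have hMle : {m' : ℕ | TerminalIn (derIter (Set.univ : Set (V α)) σ) (cs m')} ⊆
          {m' : ℕ | ords m' ≤ σ} := by
        intro m' hm'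
        by_contra hgt
        simp only [Set.mem_setOf_eq, not_le] at hgt
        obtain ⟨y, hy1, hy2⟩ := (M m').1 σ hgt
        exact ((terminal_iff hfin).mp hm').2 y hy1 hy2
      have hξσ : ξ ≤ σ := hbig σ (hMinf.mono hMle)
      -- `t` is one of the covers, hence terminal at stage `σ`, hence deleted: contradiction
      obtain ⟨j, hj⟩ := hall t ht_cov.1
      have htj : t = cs j := by
        rcases eq_or_lt_of_le hj with h | h
        · exact h.symm
        · exact absurd h (ht_cov.2 (hclt j))
      subst htj
      have htterm : TerminalIn (derIter (Set.univ : Set (V α)) σ) (cs j) :=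
        (terminal_iff hfin).mpr ⟨htDσ,
          fun y hy => (M j).2 σ ((hordle j).trans hξσ) y hy⟩
      rw [derIter_succ] at htDσ1
      exact htDσ1.2 ⟨htterm, w',
        ⟨hw'Dσ, htDσ, ht_cov.1, fun z _ hcon => ht_cov.2 hcon.1 hcon.2⟩, hinf⟩


end Paper
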